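/- Let z̃ be a random variable distributed according to the chi-squared distribution with n degrees of freedom, let ψ ∈ (0,1), β ∈ (0,1), γ > 0, and set z_x = F⁻¹_{χ²(n)}(ψ), z_scale = z_x / (−ln β)^{1/γ}, and f(z) = exp(−(z / z_scale)^γ) for z ≥ 0. Then for any vector u_nom in R^m, the scaled input u := f(z̃) · u_nom satisfies Pr(‖u‖ ≥ β ‖u_nom‖) ≥ ψ, where ‖·‖ is the Euclidean norm. -/

import Mathlib

open MeasureTheory ProbabilityTheory

/-- The chi-squared distribution with `k` degrees of freedom, i.e. the Gamma
distribution with shape `k/2` and rate `1/2`. -/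
noncomputable def chiSquared (k : ℕ) : Measure ℝ :=
  gammaMeasure ((k : ℝ) / 2) (1 / 2)

/-- The quantile function (inverse CDF) of the chi-squared distribution with `k`
degrees of freedom. -/
noncomputable def chiSquaredQuantile (k : ℕ) (q : ℝ) : ℝ :=
  sInf {x : ℝ | q ≤ cdf (chiSquared k) x}

/-- Probabilistic actuation guarantee for the explicit exponential gain law:
if `z̃ ∼ χ²(n)`, `z_x = F⁻¹_{χ²(n)}(ψ)`, `z_scale = z_x / (−ln β)^{1/γ}` and
`f(z) = exp(−(z / z_scale)^γ)`, then the scaled input `u = f(z̃) • u_nom` satisfies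
`‖u‖ ≥ β ‖u_nom‖` with probability at least `ψ`. -/
theorem exponential_gain_actuation_guarantee
    {Ω : Type*} [MeasurableSpace Ω] (μ : Measure Ω) [IsProbabilityMeasure μ]
    {n : ℕ} (hn : 0 < n) (ztilde : Ω → ℝ) (hz : Measurable ztilde)
    (hdist : Measure.map ztilde μ = chiSquared n)
    (ψ β γ : ℝ) (hψ : ψ ∈ Set.Ioo (0 : ℝ) 1) (hβ : β ∈ Set.Ioo (0 : ℝ) 1)
    (hγ : 0 < γ)
    (zx : ℝ) (hzx : zx = chiSquaredQuantile n ψ)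
    (zscale : ℝ) (hzscale : zscale = zx / (-Real.log β) ^ (1 / γ))
    (f : ℝ → ℝ) (hf : ∀ z, f z = Real.exp (-((z / zscale) ^ γ)))
    {m : ℕ} (unom : Ω → EuclideanSpace ℝ (Fin m)) :
    ENNReal.ofReal ψ ≤
      μ {ω | β * ‖unom ω‖ ≤ ‖f (ztilde ω) • unom ω‖} := by
  obtain ⟨hψ0, hψ1⟩ := hψ
  obtain ⟨hβ0, hβ1⟩ := hβ
  have hn' : (0:ℝ) < (n:ℝ) := by exact_mod_cast hn
  have ha : (0:ℝ) < (n:ℝ) / 2 := by positivity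
  have hprob : IsProbabilityMeasure (chiSquared n) :=
    isProbabilityMeasure_gammaMeasure ha (by norm_num)
  set ν := chiSquared n with hν
  set S := {x : ℝ | ψ ≤ cdf ν x} with hS
  -- chi-squared puts no mass on negatives
  have hneg : ∀ x : ℝ, x ≤ 0 → ν (Set.Iio x) = 0 := by
    intro x hx
    rw [hν, chiSquared, gammaMeasure, withDensity_apply _ measurableSet_Iio]
    exact lintegral_gammaPDF_of_nonpos hx
  -- S is nonempty
  have hSne : S.Nonempty := by
    have ht := (tendsto_cdf_atTop ν).eventually (eventually_ge_nhds hψ1)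
    obtain ⟨x, hx⟩ := ht.exists
    exact ⟨x, hx⟩
  -- 0 is a lower bound of S
  have hSlb : ∀ x ∈ S, (0:ℝ) ≤ x := by
    intro x hx
    by_contra hlt
    push_neg at hlt
    have h1 : ν (Set.Iic x) = 0 :=
      measure_mono_null (Set.Iic_subset_Iio.mpr hlt) (hneg 0 le_rfl)
    have h2 : cdf ν x = 0 := by rw [cdf_eq_real, measureReal_def, h1]; simp
    rw [hS, Set.mem_setOf_eq, h2] at hx
    linarith
  have hSbdd : BddBelow S := ⟨0, hSlb⟩
  have hzx0 : 0 ≤ zx := by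
    rw [hzx, chiSquaredQuantile]
    exact le_csInf hSne hSlb
  -- ψ ≤ cdf ν zx
  have hup : ∀ x, zx < x → ψ ≤ cdf ν x := by
    intro x hx
    rw [hzx, chiSquaredQuantile] at hx
    obtain ⟨y, hyS, hyx⟩ := exists_lt_of_csInf_lt hSne hx
    exact le_trans hyS ((cdf ν).mono hyx.le)
  have key : ψ ≤ cdf ν zx := by
    have hrc : Filter.Tendsto (cdf ν) (nhdsWithin zx (Set.Ioi zx)) (nhds (cdf ν zx)) :=
      ((cdf ν).right_continuous zx).tendsto.mono_left
        (nhdsWithin_mono _ Set.Ioi_subset_Ici_self)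
    exact ge_of_tendsto hrc (eventually_nhdsWithin_of_forall fun x hx => hup x hx)
  -- β ≤ f z for 0 ≤ z ≤ zx
  have hlogβ : 0 < -Real.log β := by
    have := Real.log_neg hβ0 hβ1; linarith
  have hc : 0 < (-Real.log β) ^ (1/γ) := Real.rpow_pos_of_pos hlogβ _
  have hfz : ∀ z : ℝ, 0 ≤ z → z ≤ zx → β ≤ f z := by
    intro z hz0 hzzx
    rw [hf]
    rcases eq_or_lt_of_le hzx0 with hzx0' | hzx0'
    · -- zx = 0, so z = 0 and zscale = 0
      have hz' : z = 0 := le_antisymm (by rw [← hzx0'] at hzzx; exact hzzx) hz0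
      have hzs : zscale = 0 := by rw [hzscale, ← hzx0', zero_div]
      rw [hz', hzs, div_zero, Real.zero_rpow hγ.ne', neg_zero, Real.exp_zero]
      exact hβ1.le
    · have hzs : 0 < zscale := by rw [hzscale]; positivity
      have hdivle : z / zscale ≤ (-Real.log β) ^ (1/γ) := by
        have : zx / zscale = (-Real.log β) ^ (1/γ) := by
          rw [hzscale]; field_simp
        rw [← this]
        gcongr
      have hrpow : (z / zscale) ^ γ ≤ -Real.log β := by
        calc (z / zscale) ^ γ ≤ ((-Real.log β) ^ (1/γ)) ^ γ :=
              Real.rpow_le_rpow (div_nonneg hz0 hzs.le) hdivle hγ.le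
          _ = (-Real.log β) ^ ((1/γ) * γ) := by
              rw [← Real.rpow_mul hlogβ.le]
          _ = -Real.log β := by
              rw [one_div_mul_cancel hγ.ne', Real.rpow_one]
      calc β = Real.exp (Real.log β) := (Real.exp_log hβ0).symm
        _ ≤ Real.exp (-((z / zscale) ^ γ)) := Real.exp_le_exp.mpr (by linarith)
  -- pointwise inclusion
  have hsub : {ω | ztilde ω ≤ zx} ⊆
      {ω | β * ‖unom ω‖ ≤ ‖f (ztilde ω) • unom ω‖} ∪ {ω | ztilde ω < 0} := by
    intro ω hω
    by_cases h0 : ztilde ω < 0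
    · exact Or.inr h0
    · push_neg at h0
      left
      have hβf : β ≤ f (ztilde ω) := hfz _ h0 hω
      have : ‖f (ztilde ω) • unom ω‖ = f (ztilde ω) * ‖unom ω‖ := by
        rw [norm_smul, Real.norm_eq_abs, abs_of_pos (by rw [hf]; exact Real.exp_pos _)]
      rw [Set.mem_setOf_eq, this]
      exact mul_le_mul_of_nonneg_right hβf (norm_nonneg _)
  -- measure computations
  have hmap : μ {ω | ztilde ω ≤ zx} = ν (Set.Iic zx) := by
    rw [← hdist, Measure.map_apply hz measurableSet_Iic]; rfl
  have hnegμ : μ {ω | ztilde ω < 0} = 0 := by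
    have : μ {ω | ztilde ω < 0} = ν (Set.Iio 0) := by
      rw [← hdist, Measure.map_apply hz measurableSet_Iio]; rfl
    rw [this]; exact hneg 0 le_rfl
  calc ENNReal.ofReal ψ ≤ ENNReal.ofReal (cdf ν zx) := ENNReal.ofReal_le_ofReal key
    _ = ν (Set.Iic zx) := ofReal_cdf ν zx
    _ = μ {ω | ztilde ω ≤ zx} := hmap.symm
    _ ≤ μ ({ω | β * ‖unom ω‖ ≤ ‖f (ztilde ω) • unom ω‖} ∪ {ω | ztilde ω < 0}) :=
        measure_mono hsub
    _ ≤ μ {ω | β * ‖unom ω‖ ≤ ‖f (ztilde ω) • unom ω‖} + μ {ω | ztilde ω < 0} :=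
        measure_union_le _ _
    _ = μ {ω | β * ‖unom ω‖ ≤ ‖f (ztilde ω) • unom ω‖} := by rw [hnegμ, add_zero]
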